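/- Every quaternionic polynomial P(X) = Σ_{k=0}^d X^k c_k, viewed as a function ℍ → ℍ via P(x) = Σ_k x^k c_k, has biharmonic real components on ℝ⁴: Δ²(P) = 0, where Δ is the Laplacian in the four real coordinates of x. -/

import Mathlib

/-- Componentwise Laplacian of an `ℍ`-valued function of four real variables. -/
noncomputable def quatLaplacianH (f : Quaternion ℝ → Quaternion ℝ) (x : Quaternion ℝ) :
    Quaternion ℝ :=
  iteratedFDeriv ℝ 2 f x ![1, 1] +
  iteratedFDeriv ℝ 2 f x ![⟨0,1,0,0⟩, ⟨0,1,0,0⟩] +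
  iteratedFDeriv ℝ 2 f x ![⟨0,0,1,0⟩, ⟨0,0,1,0⟩] +
  iteratedFDeriv ℝ 2 f x ![⟨0,0,0,1⟩, ⟨0,0,0,1⟩]

noncomputable section
open Finset

namespace QB

local notation "ℍ" => Quaternion ℝ

instance : StarModule ℝ (Quaternion ℝ) := ⟨fun r q => by ext <;> simp⟩

def e1 : ℍ := ⟨0,1,0,0⟩
def e2 : ℍ := ⟨0,0,1,0⟩
def e3 : ℍ := ⟨0,0,0,1⟩
@[simp] lemma e1_re : e1.re = 0 := rfl
@[simp] lemma e1_imI : e1.imI = 1 := rfl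
@[simp] lemma e1_imJ : e1.imJ = 0 := rfl
@[simp] lemma e1_imK : e1.imK = 0 := rfl
@[simp] lemma e2_re : e2.re = 0 := rfl
@[simp] lemma e2_imI : e2.imI = 0 := rfl
@[simp] lemma e2_imJ : e2.imJ = 1 := rfl
@[simp] lemma e2_imK : e2.imK = 0 := rfl
@[simp] lemma e3_re : e3.re = 0 := rfl
@[simp] lemma e3_imI : e3.imI = 0 := rfl
@[simp] lemma e3_imJ : e3.imJ = 0 := rfl
@[simp] lemma e3_imK : e3.imK = 1 := rfl
def B : Fin 4 → ℍ := ![1, e1, e2, e3]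

lemma B0 : B 0 = 1 := rfl
lemma B1 : B 1 = e1 := rfl
lemma B2 : B 2 = e2 := rfl
lemma B3 : B 3 = e3 := rfl

def Dop (f : ℍ → ℍ) : ℍ → ℍ := fun x => ∑ m : Fin 4, B m * fderiv ℝ f x (B m)
def Dbar (f : ℍ → ℍ) : ℍ → ℍ := fun x => ∑ m : Fin 4, star (B m) * fderiv ℝ f x (B m)

lemma sand1 (z : ℍ) : ∑ m : Fin 4, B m * z * B m = (-2 : ℝ) • star z := by
  simp only [Fin.sum_univ_four, B0, B1, B2, B3]
  ext <;>
    simp [Quaternion.re_mul, Quaternion.imI_mul, Quaternion.imJ_mul,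
      Quaternion.imK_mul] <;> ring

lemma sand2 (z : ℍ) : ∑ m : Fin 4, B m * z * star (B m) = (2 : ℝ) • z + (2 : ℝ) • star z := by
  simp only [Fin.sum_univ_four, B0, B1, B2, B3]
  ext <;>
    simp [Quaternion.re_mul, Quaternion.imI_mul, Quaternion.imJ_mul,
      Quaternion.imK_mul] <;> ring

lemma sand3 (z : ℍ) : ∑ m : Fin 4, star (B m) * z * B m = (2 : ℝ) • z + (2 : ℝ) • star z := by
  simp only [Fin.sum_univ_four, B0, B1, B2, B3]
  ext <;>
    simp [Quaternion.re_mul, Quaternion.imI_mul, Quaternion.imJ_mul,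
      Quaternion.imK_mul] <;> ring

lemma sand4 (z : ℍ) : ∑ m : Fin 4, star (B m) * z * star (B m) = (-2 : ℝ) • star z := by
  simp only [Fin.sum_univ_four, B0, B1, B2, B3]
  ext <;>
    simp [Quaternion.re_mul, Quaternion.imI_mul, Quaternion.imJ_mul,
      Quaternion.imK_mul] <;> ring

lemma comm_star (x : ℍ) : Commute x (star x) := by
  unfold Commute SemiconjBy
  ext <;> simp [Quaternion.re_mul, Quaternion.imI_mul, Quaternion.imJ_mul,
      Quaternion.imK_mul] <;> ring

lemma cross (S : Fin 4 → Fin 4 → ℍ) (hS : ∀ l m, S l m = S m l) :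
    ∑ m : Fin 4, ∑ l : Fin 4, star (B m) * (B l * S m l) = ∑ m : Fin 4, S m m := by
  have h10 := hS 1 0; have h20 := hS 2 0; have h30 := hS 3 0
  have h21 := hS 2 1; have h31 := hS 3 1; have h32 := hS 3 2
  have se1 : star e1 = -e1 := by ext <;> simp
  have se2 : star e2 = -e2 := by ext <;> simp
  have se3 : star e3 = -e3 := by ext <;> simp
  have ee1 : e1 * e1 = -1 := by
    ext <;> simp [Quaternion.re_mul, Quaternion.imI_mul, Quaternion.imJ_mul, Quaternion.imK_mul] <;> rfl
  have ee2 : e2 * e2 = -1 := by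
    ext <;> simp [Quaternion.re_mul, Quaternion.imI_mul, Quaternion.imJ_mul, Quaternion.imK_mul] <;> rfl
  have ee3 : e3 * e3 = -1 := by
    ext <;> simp [Quaternion.re_mul, Quaternion.imI_mul, Quaternion.imJ_mul, Quaternion.imK_mul] <;> rfl
  have e12 : e1 * e2 = e3 := by
    ext <;> simp [Quaternion.re_mul, Quaternion.imI_mul, Quaternion.imJ_mul, Quaternion.imK_mul]
  have e21 : e2 * e1 = -e3 := by
    ext <;> simp [Quaternion.re_mul, Quaternion.imI_mul, Quaternion.imJ_mul, Quaternion.imK_mul]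
  have e23 : e2 * e3 = e1 := by
    ext <;> simp [Quaternion.re_mul, Quaternion.imI_mul, Quaternion.imJ_mul, Quaternion.imK_mul]
  have e32 : e3 * e2 = -e1 := by
    ext <;> simp [Quaternion.re_mul, Quaternion.imI_mul, Quaternion.imJ_mul, Quaternion.imK_mul]
  have e31 : e3 * e1 = e2 := by
    ext <;> simp [Quaternion.re_mul, Quaternion.imI_mul, Quaternion.imJ_mul, Quaternion.imK_mul]
  have e13 : e1 * e3 = -e2 := by
    ext <;> simp [Quaternion.re_mul, Quaternion.imI_mul, Quaternion.imJ_mul, Quaternion.imK_mul]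
  simp only [Fin.sum_univ_four, B0, B1, B2, B3, h10, h20, h30, h21, h31, h32,
    star_one, se1, se2, se3, one_mul, mul_one, ← mul_assoc, neg_mul, mul_neg,
    ee1, ee2, ee3, e12, e21, e23, e32, e31, e13, neg_neg]
  abel

lemma contDiff_dirderiv {f : ℍ → ℍ} (hf : ContDiff ℝ ⊤ f) (v : ℍ) :
    ContDiff ℝ ⊤ (fun y => fderiv ℝ f y v) :=
  (hf.fderiv_right le_top).clm_apply contDiff_const

lemma contDiff_Dop {f : ℍ → ℍ} (hf : ContDiff ℝ ⊤ f) : ContDiff ℝ ⊤ (Dop f) := by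
  unfold Dop
  exact ContDiff.sum fun m _ => contDiff_const.mul (contDiff_dirderiv hf (B m))

lemma contDiff_Dbar {f : ℍ → ℍ} (hf : ContDiff ℝ ⊤ f) : ContDiff ℝ ⊤ (Dbar f) := by
  unfold Dbar
  exact ContDiff.sum fun m _ => contDiff_const.mul (contDiff_dirderiv hf (B m))

lemma lap_eq (f : ℍ → ℍ) (hf : ContDiff ℝ ⊤ f) (x : ℍ) :
    quatLaplacianH f x = Dbar (Dop f) x := by
  have hdf : ContDiff ℝ ⊤ (fderiv ℝ f) := hf.fderiv_right le_top
  have hdiff : Differentiable ℝ f := hf.differentiable (by simp)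
  have hdfd : Differentiable ℝ (fderiv ℝ f) := hdf.differentiable (by simp)
  have hdd : ∀ v : ℍ, DifferentiableAt ℝ (fun y => fderiv ℝ f y v) x :=
    fun v => ((contDiff_dirderiv hf v).differentiable (by simp)) x
  have hsymm : ∀ v w : ℍ, fderiv ℝ (fderiv ℝ f) x v w = fderiv ℝ (fderiv ℝ f) x w v :=
    second_derivative_symmetric (fun y => (hdiff y).hasFDerivAt) ((hdfd x).hasFDerivAt)
  have key : ∀ v w : ℍ, fderiv ℝ (fun y => fderiv ℝ f y w) x v =
      fderiv ℝ (fderiv ℝ f) x v w := by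
    intro v w
    rw [fderiv_clm_apply (hdfd x) (differentiableAt_const w)]
    simp
  have hDop : ∀ v : ℍ, fderiv ℝ (Dop f) x v =
      ∑ l : Fin 4, B l * fderiv ℝ (fderiv ℝ f) x v (B l) := by
    intro v
    unfold Dop
    rw [fderiv_fun_sum (A := fun l y => B l * fderiv ℝ f y (B l)) fun l _ => (differentiableAt_const (B l)).mul (hdd (B l))]
    simp only [ContinuousLinearMap.coe_sum', Finset.sum_apply]
    refine Finset.sum_congr rfl fun l _ => ?_
    rw [fderiv_const_mul (hdd (B l)) (B l)]
    show B l • fderiv ℝ (fun y => fderiv ℝ f y (B l)) x v = _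
    rw [key]
    simp [smul_eq_mul]
  have hRHS : Dbar (Dop f) x = ∑ m : Fin 4, fderiv ℝ (fderiv ℝ f) x (B m) (B m) := by
    unfold Dbar
    have h2 : ∀ m : Fin 4, star (B m) * fderiv ℝ (Dop f) x (B m) =
        ∑ l : Fin 4, star (B m) * (B l * fderiv ℝ (fderiv ℝ f) x (B m) (B l)) := by
      intro m; rw [hDop (B m), Finset.mul_sum]
    rw [Finset.sum_congr rfl fun m _ => h2 m]
    exact cross _ (fun l m => hsymm (B l) (B m))
  rw [hRHS]
  unfold quatLaplacianH
  rw [iteratedFDeriv_two_apply, iteratedFDeriv_two_apply, iteratedFDeriv_two_apply,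
    iteratedFDeriv_two_apply]
  simp only [Fin.sum_univ_four, B0, B1, B2, B3, Matrix.cons_val_zero, Matrix.cons_val_one,
    Matrix.head_cons]
  rfl



/-! ### monomials -/

def NF (a b : ℕ) (c : ℍ) : ℍ → ℍ := fun y => y ^ a * (star y) ^ b * c

lemma contDiff_star_q : ContDiff ℝ ⊤ (fun y : ℍ => star y) := by
  have := (starL' ℝ : ℍ ≃L[ℝ] ℍ).contDiff (n := ⊤)
  exact this

lemma contDiff_NF (a b : ℕ) (c : ℍ) : ContDiff ℝ ⊤ (NF a b c) :=
  ((contDiff_id.pow a).mul (contDiff_star_q.pow b)).mul contDiff_const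

def HD (f : ℍ → ℍ) (x v fv : ℍ) : Prop := ∃ F : ℍ →L[ℝ] ℍ, HasFDerivAt f F x ∧ F v = fv

lemma HD.fderiv_eq {f : ℍ → ℍ} {x v fv : ℍ} (h : HD f x v fv) : fderiv ℝ f x v = fv := by
  obtain ⟨F, hF, rfl⟩ := h; rw [hF.fderiv]

lemma HD.congr {f : ℍ → ℍ} {x v fv fv' : ℍ} (h : HD f x v fv) (e : fv = fv') :
    HD f x v fv' := e ▸ h

lemma HD.congr_fun {f g : ℍ → ℍ} {x v fv : ℍ} (h : HD f x v fv) (e : ∀ y, f y = g y) :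
    HD g x v fv := (funext e : f = g) ▸ h

lemma hd_const (c x v : ℍ) : HD (fun _ => c) x v 0 := ⟨0, hasFDerivAt_const c x, rfl⟩

lemma hd_id (x v : ℍ) : HD (fun y => y) x v v := ⟨ContinuousLinearMap.id ℝ _, hasFDerivAt_id x, rfl⟩

lemma HD.add {f g : ℍ → ℍ} {x v fv gv : ℍ} (hf : HD f x v fv) (hg : HD g x v gv) :
    HD (fun y => f y + g y) x v (fv + gv) := by
  obtain ⟨F, hF, hFv⟩ := hf; obtain ⟨G, hG, hGv⟩ := hg
  exact ⟨F + G, hF.add hG, by simp [hFv, hGv]⟩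

lemma HD.mul {f g : ℍ → ℍ} {x v fv gv : ℍ} (hf : HD f x v fv) (hg : HD g x v gv) :
    HD (fun y => f y * g y) x v (f x * gv + fv * g x) := by
  obtain ⟨F, hF, hFv⟩ := hf; obtain ⟨G, hG, hGv⟩ := hg
  refine ⟨_, hF.mul' hG, ?_⟩
  simp [hFv, hGv, smul_eq_mul]

lemma HD.star {f : ℍ → ℍ} {x v fv : ℍ} (hf : HD f x v fv) :
    HD (fun y => star (f y)) x v (star fv) := by
  obtain ⟨F, hF, hFv⟩ := hf
  refine ⟨_, hF.star, ?_⟩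
  show (starL' ℝ : ℍ ≃L[ℝ] ℍ) (F v) = Star.star fv
  rw [hFv]
  rfl

lemma hd_sum {ι : Type*} {s : Finset ι} {F : ι → ℍ → ℍ} {fv : ι → ℍ} {x v : ℍ}
    (h : ∀ i ∈ s, HD (F i) x v (fv i)) :
    HD (fun y => ∑ i ∈ s, F i y) x v (∑ i ∈ s, fv i) := by
  classical
  induction s using Finset.induction_on with
  | empty => exact ((hd_const 0 x v).congr_fun (by simp)).congr (by simp)
  | @insert a s ha ih =>
    have h2 := (h a (mem_insert_self a s)).add (ih fun i hi => h i (mem_insert_of_mem hi))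
    refine (h2.congr_fun fun y => ?_).congr (Finset.sum_insert ha).symm
    rw [Finset.sum_insert ha]

lemma hd_pow (a : ℕ) (x v : ℍ) :
    HD (fun y => y ^ a) x v (∑ p ∈ range a, x ^ p * v * x ^ (a - 1 - p)) := by
  induction a with
  | zero => exact ((hd_const 1 x v).congr_fun fun y => (pow_zero y).symm).congr (by simp)
  | succ a ih =>
    have h := ih.mul (hd_id x v)
    refine (h.congr_fun fun y => by rw [← pow_succ]).congr ?_
    rw [Finset.sum_mul]
    have h3 : ∀ p ∈ range a, x ^ p * v * x ^ (a - 1 - p) * x = x ^ p * v * x ^ (a - p) := by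
      intro p hp
      have hp' := mem_range.mp hp
      rw [mul_assoc, mul_assoc, ← pow_succ]
      have : a - 1 - p + 1 = a - p := by omega
      rw [this]
      rw [mul_assoc]
    rw [Finset.sum_congr rfl h3, Finset.sum_range_succ]
    simp only [Nat.add_sub_cancel, Nat.sub_self, pow_zero, mul_one]
    exact add_comm _ _

lemma hd_spow (b : ℕ) (x v : ℍ) :
    HD (fun y => (star y) ^ b) x v
      (∑ s ∈ range b, (star x) ^ s * star v * (star x) ^ (b - 1 - s)) := by
  induction b with
  | zero => exact ((hd_const 1 x v).congr_fun fun y => (pow_zero _).symm).congr (by simp)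
  | succ b ih =>
    have h := ih.mul ((hd_id x v).star)
    refine (h.congr_fun fun y => by rw [← pow_succ]).congr ?_
    rw [Finset.sum_mul]
    have h3 : ∀ s ∈ range b,
        (star x) ^ s * star v * (star x) ^ (b - 1 - s) * star x
          = (star x) ^ s * star v * (star x) ^ (b - s) := by
      intro s hs
      have hs' := mem_range.mp hs
      rw [mul_assoc, mul_assoc, ← pow_succ]
      have : b - 1 - s + 1 = b - s := by omega
      rw [this, mul_assoc]
    rw [Finset.sum_congr rfl h3, Finset.sum_range_succ]
    simp only [Nat.add_sub_cancel, Nat.sub_self, pow_zero, mul_one]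
    exact add_comm _ _

lemma hd_NF (a b : ℕ) (c x v : ℍ) :
    HD (NF a b c) x v
      ((∑ p ∈ range a, x ^ p * v * x ^ (a - 1 - p)) * (star x) ^ b * c
        + x ^ a * (∑ s ∈ range b, (star x) ^ s * star v * (star x) ^ (b - 1 - s)) * c) := by
  have h := ((hd_pow a x v).mul (hd_spow b x v)).mul (hd_const c x v)
  refine (h.congr_fun fun y => rfl).congr ?_
  rw [mul_zero, zero_add, add_mul, add_comm]



/-! ### linearity of Dop, Dbar -/

lemma Dop_sum_apply {ι : Type*} (s : Finset ι) (F : ι → ℍ → ℍ) (x : ℍ)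
    (hF : ∀ i ∈ s, DifferentiableAt ℝ (F i) x) :
    Dop (fun y => ∑ i ∈ s, F i y) x = ∑ i ∈ s, Dop (F i) x := by
  unfold Dop
  rw [fderiv_fun_sum hF]
  simp only [ContinuousLinearMap.coe_sum', Finset.sum_apply, Finset.mul_sum]
  rw [Finset.sum_comm]

lemma Dbar_sum_apply {ι : Type*} (s : Finset ι) (F : ι → ℍ → ℍ) (x : ℍ)
    (hF : ∀ i ∈ s, DifferentiableAt ℝ (F i) x) :
    Dbar (fun y => ∑ i ∈ s, F i y) x = ∑ i ∈ s, Dbar (F i) x := by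
  unfold Dbar
  rw [fderiv_fun_sum hF]
  simp only [ContinuousLinearMap.coe_sum', Finset.sum_apply, Finset.mul_sum]
  rw [Finset.sum_comm]

lemma Dop_smul_apply (r : ℝ) (F : ℍ → ℍ) (x : ℍ) (hF : DifferentiableAt ℝ F x) :
    Dop (fun y => r • F y) x = r • Dop F x := by
  unfold Dop
  rw [fderiv_fun_const_smul hF r]
  simp only [ContinuousLinearMap.coe_smul', Pi.smul_apply, mul_smul_comm]
  rw [Finset.smul_sum]

lemma Dbar_smul_apply (r : ℝ) (F : ℍ → ℍ) (x : ℍ) (hF : DifferentiableAt ℝ F x) :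
    Dbar (fun y => r • F y) x = r • Dbar F x := by
  unfold Dbar
  rw [fderiv_fun_const_smul hF r]
  simp only [ContinuousLinearMap.coe_smul', Pi.smul_apply, mul_smul_comm]
  rw [Finset.smul_sum]

/-! ### normal-form helpers -/

lemma nf1 (p q r : ℕ) (c x : ℍ) :
    (star x) ^ p * (x ^ q * ((star x) ^ r * c)) = NF q (r + p) c x := by
  have h : (star x) ^ p * x ^ q = x ^ q * (star x) ^ p := ((comm_star x).symm.pow_pow p q).eq
  calc (star x) ^ p * (x ^ q * ((star x) ^ r * c))
      = ((star x) ^ p * x ^ q) * ((star x) ^ r * c) := by rw [mul_assoc]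
    _ = (x ^ q * (star x) ^ p) * ((star x) ^ r * c) := by rw [h]
    _ = x ^ q * ((star x) ^ p * ((star x) ^ r * c)) := by rw [mul_assoc]
    _ = x ^ q * ((star x) ^ (r + p) * c) := by
          rw [← mul_assoc ((star x) ^ p), ← pow_add, Nat.add_comm p r]
    _ = NF q (r + p) c x := by rw [NF, mul_assoc]

lemma nf3 (m a r : ℕ) (c x : ℍ) :
    (x ^ m * (star x) ^ a) * ((star x) ^ r * c) = NF m (a + r) c x := by
  calc (x ^ m * (star x) ^ a) * ((star x) ^ r * c)
      = x ^ m * ((star x) ^ a * ((star x) ^ r * c)) := by rw [mul_assoc]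
    _ = x ^ m * ((star x) ^ (a + r) * c) := by rw [← mul_assoc ((star x) ^ a), ← pow_add]
    _ = NF m (a + r) c x := by rw [NF, mul_assoc]

lemma star_z (a s : ℕ) (x : ℍ) :
    star (x ^ a * (star x) ^ s) = x ^ s * (star x) ^ a := by
  rw [star_mul, star_pow, star_pow, star_star]

/-! ### Dop and Dbar on monomials -/

lemma Dop_NF (a b : ℕ) (c x : ℍ) :
    Dop (NF a b c) x =
      (-2 : ℝ) • ∑ p ∈ range a, NF (a - 1 - p) (b + p) c x
      + ((2 : ℝ) • ∑ s ∈ range b, NF a (b - 1) c x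
        + (2 : ℝ) • ∑ s ∈ range b, NF s (a + b - 1 - s) c x) := by
  unfold Dop
  have hval : ∀ m : Fin 4, B m * fderiv ℝ (NF a b c) x (B m)
      = (∑ p ∈ range a, B m * x ^ p * B m * (x ^ (a - 1 - p) * ((star x) ^ b * c)))
        + ∑ s ∈ range b, B m * (x ^ a * (star x) ^ s) * star (B m) * ((star x) ^ (b - 1 - s) * c) := by
    intro m
    rw [(hd_NF a b c x (B m)).fderiv_eq]
    simp only [mul_add, add_mul, Finset.sum_mul, Finset.mul_sum, mul_assoc]
  rw [Finset.sum_congr rfl fun m _ => hval m, Finset.sum_add_distrib]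
  congr 1
  · rw [Finset.sum_comm]
    have h1 : ∀ p ∈ range a,
        (∑ m : Fin 4, B m * x ^ p * B m * (x ^ (a - 1 - p) * ((star x) ^ b * c)))
          = (-2 : ℝ) • NF (a - 1 - p) (b + p) c x := by
      intro p hp
      rw [← Finset.sum_mul, sand1, star_pow, smul_mul_assoc, nf1]
    rw [Finset.sum_congr rfl h1, ← Finset.smul_sum]
  · rw [Finset.sum_comm]
    have h2 : ∀ s ∈ range b,
        (∑ m : Fin 4, B m * (x ^ a * (star x) ^ s) * star (B m) * ((star x) ^ (b - 1 - s) * c))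
          = (2 : ℝ) • NF a (b - 1) c x + (2 : ℝ) • NF s (a + b - 1 - s) c x := by
      intro s hs
      have hs' := mem_range.mp hs
      rw [← Finset.sum_mul, sand2, star_z, add_mul, smul_mul_assoc, smul_mul_assoc, nf3, nf3]
      have e1 : s + (b - 1 - s) = b - 1 := by omega
      have e2 : a + (b - 1 - s) = a + b - 1 - s := by omega
      rw [e1, e2]
    rw [Finset.sum_congr rfl h2, Finset.sum_add_distrib, ← Finset.smul_sum, ← Finset.smul_sum]

lemma Dbar_NF (a b : ℕ) (c x : ℍ) :
    Dbar (NF a b c) x =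
      ((2 : ℝ) • ∑ p ∈ range a, NF (a - 1) b c x
        + (2 : ℝ) • ∑ p ∈ range a, NF (a - 1 - p) (b + p) c x)
      + (-2 : ℝ) • ∑ s ∈ range b, NF s (a + b - 1 - s) c x := by
  unfold Dbar
  have hval : ∀ m : Fin 4, star (B m) * fderiv ℝ (NF a b c) x (B m)
      = (∑ p ∈ range a, star (B m) * x ^ p * B m * (x ^ (a - 1 - p) * ((star x) ^ b * c)))
        + ∑ s ∈ range b, star (B m) * (x ^ a * (star x) ^ s) * star (B m) * ((star x) ^ (b - 1 - s) * c) := by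
    intro m
    rw [(hd_NF a b c x (B m)).fderiv_eq]
    simp only [mul_add, add_mul, Finset.sum_mul, Finset.mul_sum, mul_assoc]
  rw [Finset.sum_congr rfl fun m _ => hval m, Finset.sum_add_distrib]
  congr 1
  · rw [Finset.sum_comm]
    have h1 : ∀ p ∈ range a,
        (∑ m : Fin 4, star (B m) * x ^ p * B m * (x ^ (a - 1 - p) * ((star x) ^ b * c)))
          = (2 : ℝ) • NF (a - 1) b c x + (2 : ℝ) • NF (a - 1 - p) (b + p) c x := by
      intro p hp
      have hp' := mem_range.mp hp
      rw [← Finset.sum_mul, sand3, add_mul, smul_mul_assoc, smul_mul_assoc, star_pow, nf1]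
      have e0 : (x : ℍ) ^ p * (x ^ (a - 1 - p) * ((star x) ^ b * c)) = NF (a - 1) b c x := by
        rw [← mul_assoc, ← pow_add, NF, mul_assoc]
        congr 2
        omega
      rw [e0]
    rw [Finset.sum_congr rfl h1, Finset.sum_add_distrib, ← Finset.smul_sum, ← Finset.smul_sum]
  · rw [Finset.sum_comm]
    have h2 : ∀ s ∈ range b,
        (∑ m : Fin 4, star (B m) * (x ^ a * (star x) ^ s) * star (B m) * ((star x) ^ (b - 1 - s) * c))
          = (-2 : ℝ) • NF s (a + b - 1 - s) c x := by
      intro s hs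
      have hs' := mem_range.mp hs
      rw [← Finset.sum_mul, sand4, star_z, smul_mul_assoc, nf3]
      have e2 : a + (b - 1 - s) = a + b - 1 - s := by omega
      rw [e2]
    rw [Finset.sum_congr rfl h2, ← Finset.smul_sum]



/-! ### combinatorial sum helpers -/

lemma wtri (M : ℕ) (F : ℕ → ℕ → ℍ) :
    ∑ j ∈ range M, ∑ p ∈ range j, F j p = ∑ p ∈ range M, ∑ j ∈ Ico (p + 1) M, F j p := by
  induction M with
  | zero => simp
  | succ M ih =>
    rw [Finset.sum_range_succ, ih,
      Finset.sum_range_succ (fun p => ∑ j ∈ Ico (p + 1) (M + 1), F j p) M]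
    rw [Finset.Ico_self, Finset.sum_empty, add_zero]
    have h1 : ∀ p ∈ range M, ∑ j ∈ Ico (p + 1) (M + 1), F j p
        = (∑ j ∈ Ico (p + 1) M, F j p) + F M p := by
      intro p hp
      exact Finset.sum_Ico_succ_top (by have := mem_range.mp hp; omega) _
    rw [Finset.sum_congr rfl h1, Finset.sum_add_distrib]

lemma cnt (N : ℕ) (H : ℕ → ℍ) :
    ∑ i ∈ range N, ∑ s ∈ range i, H s = ∑ s ∈ range N, (N - (s + 1)) • H s := by
  rw [wtri N (fun _ s => H s)]
  refine Finset.sum_congr rfl fun s _ => ?_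
  rw [Finset.sum_const, Nat.card_Ico]

lemma tswap (N : ℕ) (g : ℕ → ℍ) :
    ∑ i ∈ range N, ∑ j ∈ Ico i N, g j = ∑ j ∈ range N, (j + 1) • g j := by
  induction N with
  | zero => simp
  | succ N ih =>
    have h1 : ∀ i ∈ range N, ∑ j ∈ Ico i (N + 1), g j = (∑ j ∈ Ico i N, g j) + g N := by
      intro i hi
      exact Finset.sum_Ico_succ_top (by have := mem_range.mp hi; omega) _
    rw [Finset.sum_range_succ, Finset.sum_congr rfl h1, Finset.sum_add_distrib, ih,
      Finset.sum_range_succ (fun j => (j + 1) • g j) N]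
    have h2 : ∑ j ∈ Ico N (N + 1), g j = g N := by
      rw [Finset.sum_Ico_succ_top le_rfl, Finset.Ico_self, Finset.sum_empty, zero_add]
    rw [Finset.sum_const, card_range, h2, add_assoc, ← succ_nsmul]

lemma sym2 (N : ℕ) (F : ℕ → ℕ → ℍ) :
    ∑ j ∈ range N, ∑ s ∈ range (N - j), F j s = ∑ s ∈ range N, ∑ j ∈ range (N - s), F j s := by
  induction N with
  | zero => simp
  | succ N ih =>
    have inner : ∀ (G : ℕ → ℕ → ℍ), ∀ j ∈ range (N + 1),
        ∑ s ∈ range (N + 1 - j), G j s = (∑ s ∈ range (N - j), G j s) + G j (N - j) := by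
      intro G j hj
      have hj' := mem_range.mp hj
      have e : N + 1 - j = (N - j) + 1 := by omega
      rw [e, Finset.sum_range_succ]
    have diag : ∑ j ∈ range (N + 1), F j (N - j)
        = ∑ s ∈ range (N + 1), F (N - s) s := by
      rw [← Finset.sum_range_reflect (fun j => F j (N - j)) (N + 1)]
      refine Finset.sum_congr rfl fun s hs => ?_
      have hs' := mem_range.mp hs
      have e1 : N + 1 - 1 - s = N - s := by omega
      have e2 : N - (N - s) = s := by omega
      rw [e1, e2]
    rw [Finset.sum_congr rfl (inner F), Finset.sum_add_distrib,
      Finset.sum_range_succ (fun j => ∑ s ∈ range (N - j), F j s) N, Nat.sub_self,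
      Finset.sum_congr rfl (inner (fun s j => F j s)), Finset.sum_add_distrib,
      Finset.sum_range_succ (fun s => ∑ j ∈ range (N - s), F j s) N, Nat.sub_self]
    simp only [Finset.range_zero, Finset.sum_empty, add_zero]
    rw [ih, diag]

lemma sum_range_drop_top (n : ℕ) (f : ℕ → ℍ) (h : ∀ m, n = m + 1 → f m = 0) :
    ∑ i ∈ range n, f i = ∑ i ∈ range (n - 1), f i := by
  cases n with
  | zero => simp
  | succ m => rw [Finset.sum_range_succ, h m rfl, add_zero, Nat.succ_sub_one]



/-! ### the pipeline -/

lemma diff_NF (a b : ℕ) (c : ℍ) : Differentiable ℝ (NF a b c) :=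
  (contDiff_NF a b c).differentiable (by simp)

lemma DopP (k : ℕ) (c x : ℍ) :
    Dop (NF k 0 c) x = (-2 : ℝ) • ∑ i ∈ range k, NF (k - 1 - i) i c x := by
  rw [Dop_NF]
  simp only [Finset.range_zero, Finset.sum_empty, smul_zero, add_zero, Nat.zero_add]

lemma DbarDopP (k : ℕ) (c x : ℍ) :
    Dbar (fun y => (-2 : ℝ) • ∑ i ∈ range k, NF (k - 1 - i) i c y) x
      = (-4 : ℝ) • ∑ j ∈ range (k - 1), ((j : ℝ) + 1) • NF j (k - 2 - j) c x := by
  rw [Dbar_smul_apply _ _ _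
    (((ContDiff.sum fun i (_ : i ∈ range k) => contDiff_NF (k - 1 - i) i c).differentiable
      (by simp)) x)]
  rw [Dbar_sum_apply _ _ _ (fun i _ => (diff_NF _ _ c).differentiableAt)]
  rw [Finset.sum_congr rfl (fun i _ => Dbar_NF (k - 1 - i) i c x)]
  have hsplit : ∀ i ∈ range k,
      ((2 : ℝ) • ∑ p ∈ range (k - 1 - i), NF (k - 1 - i - 1) i c x
        + (2 : ℝ) • ∑ p ∈ range (k - 1 - i), NF (k - 1 - i - 1 - p) (i + p) c x)
        + (-2 : ℝ) • ∑ s ∈ range i, NF s (k - 1 - i + i - 1 - s) c x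
      = ((2 : ℝ) • ((k - 1 - i) • NF (k - 2 - i) i c x)
        + (2 : ℝ) • ∑ j ∈ Ico i (k - 1), NF (k - 2 - j) j c x)
        + (-2 : ℝ) • ∑ s ∈ range i, NF s (k - 2 - s) c x := by
    intro i hi
    have hi' := mem_range.mp hi
    have p1 : ∑ p ∈ range (k - 1 - i), NF (k - 1 - i - 1) i c x
        = (k - 1 - i) • NF (k - 2 - i) i c x := by
      have e : k - 1 - i - 1 = k - 2 - i := by omega
      rw [e, Finset.sum_const, card_range]
    have p2 : ∑ p ∈ range (k - 1 - i), NF (k - 1 - i - 1 - p) (i + p) c x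
        = ∑ j ∈ Ico i (k - 1), NF (k - 2 - j) j c x := by
      rw [Finset.sum_Ico_eq_sum_range]
      refine Finset.sum_congr rfl fun p hp => ?_
      have hp' := mem_range.mp hp
      have e1 : k - 1 - i - 1 - p = k - 2 - (i + p) := by omega
      rw [e1]
    have p3 : ∑ s ∈ range i, NF s (k - 1 - i + i - 1 - s) c x
        = ∑ s ∈ range i, NF s (k - 2 - s) c x := by
      refine Finset.sum_congr rfl fun s hs => ?_
      have hs' := mem_range.mp hs
      have e : k - 1 - i + i - 1 - s = k - 2 - s := by omega
      rw [e]
    rw [p1, p2, p3]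
  rw [Finset.sum_congr rfl hsplit]
  rw [Finset.sum_add_distrib, Finset.sum_add_distrib]
  rw [← Finset.smul_sum, ← Finset.smul_sum, ← Finset.smul_sum]
  -- T_B + T_C = 0
  have TB : ∑ i ∈ range k, ∑ j ∈ Ico i (k - 1), NF (k - 2 - j) j c x
      = ∑ j ∈ range (k - 1), (j + 1) • NF (k - 2 - j) j c x := by
    rw [sum_range_drop_top k (fun i => ∑ j ∈ Ico i (k - 1), NF (k - 2 - j) j c x)
      (fun m hm => by simp [show k - 1 = m from by omega])]
    exact tswap (k - 1) _
  have TC : ∑ i ∈ range k, ∑ s ∈ range i, NF s (k - 2 - s) c x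
      = ∑ s ∈ range (k - 1), (k - (s + 1)) • NF s (k - 2 - s) c x := by
    rw [cnt k (fun s => NF s (k - 2 - s) c x)]
    exact sum_range_drop_top k _ (fun m hm => by
      rw [show k - (m + 1) = 0 from by omega, zero_smul])
  have TBC : ∑ j ∈ range (k - 1), (j + 1) • NF (k - 2 - j) j c x
      = ∑ s ∈ range (k - 1), (k - (s + 1)) • NF s (k - 2 - s) c x := by
    rw [← Finset.sum_range_reflect (fun j => (j + 1) • NF (k - 2 - j) j c x) (k - 1)]
    refine Finset.sum_congr rfl fun s hs => ?_
    have hs' := mem_range.mp hs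
    have e1 : k - 1 - 1 - s + 1 = k - (s + 1) := by omega
    have e2 : k - 2 - (k - 1 - 1 - s) = s := by omega
    have e3 : k - 1 - 1 - s = k - 2 - s := by omega
    rw [e1, e2, e3]
  have TA : ∑ i ∈ range k, (k - 1 - i) • NF (k - 2 - i) i c x
      = ∑ s ∈ range (k - 1), (s + 1) • NF s (k - 2 - s) c x := by
    rw [sum_range_drop_top k _ (fun m hm => by
      rw [show k - 1 - m = 0 from by omega, zero_smul])]
    rw [← Finset.sum_range_reflect (fun s => (s + 1) • NF s (k - 2 - s) c x) (k - 1)]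
    refine Finset.sum_congr rfl fun i hi => ?_
    have hi' := mem_range.mp hi
    have e1 : k - 1 - 1 - i + 1 = k - 1 - i := by omega
    have e2 : k - 1 - 1 - i = k - 2 - i := by omega
    have e3 : k - 2 - (k - 2 - i) = i := by omega
    rw [e1, e2, e3]
  rw [TB, TBC, TC, TA]
  rw [add_assoc, ← add_smul]
  have hz : (2 : ℝ) + -2 = 0 := by norm_num
  rw [hz, zero_smul, add_zero, smul_smul]
  have h4 : (-2 : ℝ) * 2 = -4 := by norm_num
  rw [h4]
  congr 1
  refine Finset.sum_congr rfl fun s _ => ?_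
  rw [← Nat.cast_smul_eq_nsmul ℝ]
  push_cast
  rfl



lemma gauss_nat (s t : ℕ) :
    ∑ j ∈ Ico (s + 1) (s + 1 + t), (j + 1) = (s + 1) * t + ∑ j ∈ range t, (j + 1) := by
  induction t with
  | zero => simp
  | succ t ih =>
    rw [show s + 1 + (t + 1) = (s + 1 + t) + 1 from rfl,
      Finset.sum_Ico_succ_top (by omega), ih, Finset.sum_range_succ]
    ring

lemma DopLap (k : ℕ) (c x : ℍ) :
    Dop (fun y => (-4 : ℝ) • ∑ j ∈ range (k - 1), ((j : ℝ) + 1) • NF j (k - 2 - j) c y) x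
      = 0 := by
  rw [Dop_smul_apply _ _ _
    (((ContDiff.sum fun j (_ : j ∈ range (k - 1)) =>
      (contDiff_NF j (k - 2 - j) c).const_smul _).differentiable (by simp)) x)]
  rw [Dop_sum_apply _ _ _
    (fun j _ => (((contDiff_NF j (k - 2 - j) c).const_smul _).differentiable (by simp)) x)]
  rw [Finset.sum_congr rfl
    (fun j (_ : j ∈ range (k - 1)) =>
      Dop_smul_apply ((j : ℝ) + 1) _ x (diff_NF j (k - 2 - j) c).differentiableAt)]
  have hsplit : ∀ j ∈ range (k - 1),
      ((j : ℝ) + 1) • Dop (NF j (k - 2 - j) c) x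
      = (-2 : ℝ) • (∑ p ∈ range j, ((j : ℝ) + 1) • NF p (k - 3 - p) c x)
        + ((2 : ℝ) • (((j : ℝ) + 1) • (k - 2 - j) • NF j (k - 3 - j) c x)
          + (2 : ℝ) • (∑ s ∈ range (k - 2 - j), ((j : ℝ) + 1) • NF s (k - 3 - s) c x)) := by
    intro j hj
    have hj' := mem_range.mp hj
    rw [Dop_NF]
    have q1 : ∑ p ∈ range j, NF (j - 1 - p) (k - 2 - j + p) c x
        = ∑ p ∈ range j, NF p (k - 3 - p) c x := by
      rw [← Finset.sum_range_reflect (fun p => NF p (k - 3 - p) c x) j]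
      refine Finset.sum_congr rfl fun p hp => ?_
      have hp' := mem_range.mp hp
      have e1 : k - 2 - j + p = k - 3 - (j - 1 - p) := by omega
      rw [e1]
    have q2 : ∑ s ∈ range (k - 2 - j), NF j (k - 2 - j - 1) c x
        = (k - 2 - j) • NF j (k - 3 - j) c x := by
      have e : k - 2 - j - 1 = k - 3 - j := by omega
      rw [e, Finset.sum_const, card_range]
    have q3 : ∑ s ∈ range (k - 2 - j), NF s (j + (k - 2 - j) - 1 - s) c x
        = ∑ s ∈ range (k - 2 - j), NF s (k - 3 - s) c x := by
      refine Finset.sum_congr rfl fun s hs => ?_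
      have hs' := mem_range.mp hs
      have e : j + (k - 2 - j) - 1 - s = k - 3 - s := by omega
      rw [e]
    rw [q1, q2, q3]
    simp only [smul_add, Finset.smul_sum, smul_comm ((j : ℝ) + 1) (-2 : ℝ),
      smul_comm ((j : ℝ) + 1) (2 : ℝ)]
  rw [Finset.sum_congr rfl hsplit, Finset.sum_add_distrib, Finset.sum_add_distrib,
    ← Finset.smul_sum, ← Finset.smul_sum, ← Finset.smul_sum]
  -- T1 = Σ_j Σ_{p<j} (j+1)•H p ; T2 = Σ_j (j+1)•(k-2-j)•H j ; T3 = Σ_j Σ_{s<k-2-j} (j+1)•H s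
  have T1 : ∑ j ∈ range (k - 1), ∑ p ∈ range j, ((j : ℝ) + 1) • NF p (k - 3 - p) c x
      = ∑ p ∈ range (k - 2), ∑ j ∈ Ico (p + 1) (k - 1), ((j : ℝ) + 1) • NF p (k - 3 - p) c x := by
    rw [wtri (k - 1) (fun j p => ((j : ℝ) + 1) • NF p (k - 3 - p) c x)]
    exact sum_range_drop_top (k - 1) _ (fun m hm => by
      simp [show k - 1 = m + 1 from hm, Finset.Ico_self]) |>.trans (by rw [show k - 1 - 1 = k - 2 from by omega])
  have T2 : ∑ j ∈ range (k - 1), ((j : ℝ) + 1) • (k - 2 - j) • NF j (k - 3 - j) c x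
      = ∑ j ∈ range (k - 2), ((j : ℝ) + 1) • (k - 2 - j) • NF j (k - 3 - j) c x := by
    refine (sum_range_drop_top (k - 1) _ (fun m hm => by
      rw [show k - 2 - m = 0 from by omega, zero_smul, smul_zero])).trans ?_
    rw [show k - 1 - 1 = k - 2 from by omega]
  have T3 : ∑ j ∈ range (k - 1), ∑ s ∈ range (k - 2 - j), ((j : ℝ) + 1) • NF s (k - 3 - s) c x
      = ∑ s ∈ range (k - 2), ∑ j ∈ range (k - 2 - s), ((j : ℝ) + 1) • NF s (k - 3 - s) c x := by
    refine (sum_range_drop_top (k - 1) _ (fun m hm => by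
      rw [show k - 2 - m = 0 from by omega]; simp)).trans ?_
    rw [show k - 1 - 1 = k - 2 from by omega]
    exact sym2 (k - 2) (fun j s => ((j : ℝ) + 1) • NF s (k - 3 - s) c x)
  rw [T1, T2, T3]
  have key : ∀ p ∈ range (k - 2),
      ∑ j ∈ Ico (p + 1) (k - 1), ((j : ℝ) + 1) • NF p (k - 3 - p) c x
      = ((p : ℝ) + 1) • (k - 2 - p) • NF p (k - 3 - p) c x
        + ∑ j ∈ range (k - 2 - p), ((j : ℝ) + 1) • NF p (k - 3 - p) c x := by
    intro p hp
    have hp' := mem_range.mp hp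
    rw [← Finset.sum_smul, ← Finset.sum_smul, ← Nat.cast_smul_eq_nsmul ℝ (k - 2 - p),
      smul_smul, ← add_smul]
    congr 1
    have hnat := gauss_nat p (k - 2 - p)
    rw [show p + 1 + (k - 2 - p) = k - 1 from by omega] at hnat
    have := congrArg (fun n : ℕ => (n : ℝ)) hnat
    push_cast at this ⊢
    linarith [this]
  rw [Finset.sum_congr rfl key, Finset.sum_add_distrib, smul_add]
  generalize (∑ p ∈ range (k - 2), ((p : ℝ) + 1) • (k - 2 - p) • NF p (k - 3 - p) c x) = A
  generalize (∑ p ∈ range (k - 2), ∑ j ∈ range (k - 2 - p), ((j : ℝ) + 1) • NF p (k - 3 - p) c x) = Bq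
  module



/-! ### main theorem -/

theorem polynomial_biharmonic' (d : ℕ) (c : ℕ → Quaternion ℝ) (x : Quaternion ℝ) :
    quatLaplacianH
      (quatLaplacianH (fun y => ∑ k ∈ Finset.range (d + 1), y ^ k * c k)) x = 0 := by
  classical
  have hP : (fun y => ∑ k ∈ Finset.range (d + 1), y ^ k * c k)
      = fun y => ∑ k ∈ range (d + 1), NF k 0 (c k) y := by
    funext y; exact Finset.sum_congr rfl fun k _ => by simp [NF]
  rw [hP]
  have hCP : ContDiff ℝ ⊤ (fun y : ℍ => ∑ k ∈ range (d + 1), NF k 0 (c k) y) :=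
    ContDiff.sum fun k _ => contDiff_NF k 0 (c k)
  have hinner : quatLaplacianH (fun y => ∑ k ∈ range (d + 1), NF k 0 (c k) y)
      = fun z => ∑ k ∈ range (d + 1),
          (-4 : ℝ) • ∑ j ∈ range (k - 1), ((j : ℝ) + 1) • NF j (k - 2 - j) (c k) z := by
    funext z
    rw [lap_eq _ hCP z]
    have hDop : Dop (fun y => ∑ k ∈ range (d + 1), NF k 0 (c k) y)
        = fun z' => ∑ k ∈ range (d + 1),
            (-2 : ℝ) • ∑ i ∈ range k, NF (k - 1 - i) i (c k) z' := by
      funext z'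
      rw [Dop_sum_apply _ _ _ (fun k _ => (diff_NF k 0 (c k)).differentiableAt)]
      exact Finset.sum_congr rfl fun k _ => DopP k (c k) z'
    rw [hDop]
    rw [Dbar_sum_apply _ _ _ (fun k _ =>
      ((((ContDiff.sum fun i (_ : i ∈ range k) => contDiff_NF (k - 1 - i) i (c k)).const_smul
        ((-2 : ℝ))).differentiable (by simp)) z))]
    exact Finset.sum_congr rfl fun k _ => DbarDopP k (c k) z
  rw [hinner]
  have hC2 : ContDiff ℝ ⊤ (fun z : ℍ => ∑ k ∈ range (d + 1),
      (-4 : ℝ) • ∑ j ∈ range (k - 1), ((j : ℝ) + 1) • NF j (k - 2 - j) (c k) z) :=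
    ContDiff.sum fun k _ =>
      (ContDiff.sum fun j _ => (contDiff_NF j (k - 2 - j) (c k)).const_smul _).const_smul _
  rw [lap_eq _ hC2 x]
  have hDop0 : Dop (fun z => ∑ k ∈ range (d + 1),
      (-4 : ℝ) • ∑ j ∈ range (k - 1), ((j : ℝ) + 1) • NF j (k - 2 - j) (c k) z)
      = fun _ => (0 : ℍ) := by
    funext z
    rw [Dop_sum_apply _ _ _ (fun k _ =>
      ((((ContDiff.sum fun j (_ : j ∈ range (k - 1)) =>
          (contDiff_NF j (k - 2 - j) (c k)).const_smul ((j : ℝ) + 1)).const_smul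
        ((-4 : ℝ))).differentiable (by simp)) z))]
    rw [Finset.sum_congr rfl fun k _ => DopLap k (c k) z]
    simp
  rw [hDop0]
  unfold Dbar
  simp

end QB

/-- Every quaternionic polynomial `P(x) = Σ_k x^k c_k` is biharmonic: `Δ²P = 0`. -/
theorem polynomial_biharmonic (d : ℕ) (c : ℕ → Quaternion ℝ) (x : Quaternion ℝ) :
    quatLaplacianH
      (quatLaplacianH (fun y => ∑ k ∈ Finset.range (d + 1), y ^ k * c k)) x = 0 :=
  QB.polynomial_biharmonic' d c x
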